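/- Let V be a right Banach ℍ-module and T ∈ B(V). If q ∈ σ_S(T) is a right eigenvalue of finite type of T, then q ∉ σ_W^S(T), where σ_W^S(T) is the Weyl S-spectrum of T. -/

import Mathlib

/-!
Quaternionic setting: `ℍ` is the real quaternions.  A right Banach `ℍ`-module is
formalized as a real Banach space `V` together with a compatible `Module ℍᵐᵒᵖ V`
structure (right `ℍ`-action) satisfying `‖x • q‖ = ‖x‖ * |q|`; bounded right
`ℍ`-linear operators are the continuous `ℍᵐᵒᵖ`-linear maps `V →L[ℍᵐᵒᵖ] V`.
-/

open MulOpposite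

notation "ℍ" => Quaternion ℝ

section Defs

variable {W : Type*} [NormedAddCommGroup W] [Module ℍᵐᵒᵖ W] [Module ℝ W]
  [SMulCommClass ℍᵐᵒᵖ ℝ W] [ContinuousConstSMul ℝ W]

/-- `Q_q(T) = T² − 2 Re(q) T + |q|² I`. -/
noncomputable def Qs (T : W →L[ℍᵐᵒᵖ] W) (q : ℍ) : W →L[ℍᵐᵒᵖ] W :=
  T * T - (2 * q.re) • T + (‖q‖ ^ 2) • (1 : W →L[ℍᵐᵒᵖ] W)

/-- The S-resolvent set: `q` such that `Q_q(T)` is bijective with bounded inverse,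
i.e. invertible in the ring `B(W)`. -/
noncomputable def sResolvent (T : W →L[ℍᵐᵒᵖ] W) : Set ℍ :=
  {q | IsUnit (Qs T q)}

/-- The S-spectrum `σ_S(T) = ℍ \ ρ_S(T)`. -/
noncomputable def sSpectrum (T : W →L[ℍᵐᵒᵖ] W) : Set ℍ :=
  {q | ¬ IsUnit (Qs T q)}

/-- A compact operator: the image of the closed unit ball is relatively compact. -/
def IsCompactOp (K : W →L[ℍᵐᵒᵖ] W) : Prop :=
  IsCompact (closure (⇑K '' Metric.closedBall (0 : W) 1))

/-- `S` is a quasi-inverse of `T` if `S T = I - K₁` and `T S = I - K₂` with `K₁, K₂` compact. -/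
def IsQuasiInverse (S T : W →L[ℍᵐᵒᵖ] W) : Prop :=
  ∃ K₁ K₂ : W →L[ℍᵐᵒᵖ] W, IsCompactOp K₁ ∧ IsCompactOp K₂ ∧
    S * T = 1 - K₁ ∧ T * S = 1 - K₂

/-- The essential S-spectrum: `q` such that `Q_q(T)` admits no quasi-inverse. -/
noncomputable def essSpectrum (T : W →L[ℍᵐᵒᵖ] W) : Set ℍ :=
  {q | ¬ ∃ S : W →L[ℍᵐᵒᵖ] W, IsQuasiInverse S (Qs T q)}

/-- The Weyl S-spectrum: `⋂ σ_S(T + K)` over all compact `K`. -/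
noncomputable def weylSpectrum (T : W →L[ℍᵐᵒᵖ] W) : Set ℍ :=
  ⋂ K ∈ {K : W →L[ℍᵐᵒᵖ] W | IsCompactOp K}, sSpectrum (T + K)

/-- The 2-sphere `[q] = {h q h⁻¹ : h ∈ ℍ \ {0}}`. -/
def qSphere (q : ℍ) : Set ℍ := {p | ∃ h : ℍ, h ≠ 0 ∧ p = h * q * h⁻¹}

/-- Minimum modulus `μ(T) = inf {‖T x‖ : ‖x‖ = 1}`. -/
noncomputable def muMin (T : W →L[ℍᵐᵒᵖ] W) : ℝ :=
  sInf {c : ℝ | ∃ x : W, ‖x‖ = 1 ∧ c = ‖T x‖}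

/-- Operator norm of a bounded right `ℍ`-linear operator. -/
noncomputable def opNorm (T : W →L[ℍᵐᵒᵖ] W) : ℝ :=
  sInf {c : ℝ | 0 ≤ c ∧ ∀ x : W, ‖T x‖ ≤ c * ‖x‖}

/-- Restriction of `T` to an invariant submodule. -/
noncomputable def restrictOp (T : W →L[ℍᵐᵒᵖ] W) (M : Submodule ℍᵐᵒᵖ W)
    (h : ∀ x ∈ M, T x ∈ M) : ↥M →L[ℍᵐᵒᵖ] ↥M where
  toLinearMap := (T : W →ₗ[ℍᵐᵒᵖ] W).restrict h
  cont := Continuous.subtype_mk (T.continuous.comp continuous_subtype_val) _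

end Defs

section Sub

variable {V : Type*} [NormedAddCommGroup V] [NormedSpace ℝ V]
  [Module ℍᵐᵒᵖ V] [IsScalarTower ℝ ℍᵐᵒᵖ V] [SMulCommClass ℍᵐᵒᵖ ℝ V]

instance (M : Submodule ℍᵐᵒᵖ V) : SMulCommClass ℍᵐᵒᵖ ℝ ↥M := by
  constructor
  intro q r x
  apply Subtype.ext
  simp only [Submodule.coe_smul_of_tower, SetLike.val_smul]
  exact smul_comm q r (x : V)

instance (M : Submodule ℍᵐᵒᵖ V) : ContinuousConstSMul ℝ ↥M := by
  constructor
  intro r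
  have h : Continuous fun x : ↥M => r • (x : V) :=
    (continuous_const_smul r).comp continuous_subtype_val
  exact Continuous.subtype_mk h _

/-- `q` is a right eigenvalue of finite type of `T`: `V` is the direct sum of two closed
`T`-invariant right `ℍ`-submodules `M₁`, `M₂` with `M₁` finite-dimensional over `ℍ`,
`σ_S(T|M₁) ∩ σ_S(T|M₂) = ∅` and `σ_S(T|M₁) = [q]`. -/
noncomputable def IsFiniteTypeEigenvalue (T : V →L[ℍᵐᵒᵖ] V) (q : ℍ) : Prop :=
  ∃ (M₁ M₂ : Submodule ℍᵐᵒᵖ V) (h₁ : ∀ x ∈ M₁, T x ∈ M₁) (h₂ : ∀ x ∈ M₂, T x ∈ M₂),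
    IsClosed (M₁ : Set V) ∧ IsClosed (M₂ : Set V) ∧ IsCompl M₁ M₂ ∧
    FiniteDimensional ℍᵐᵒᵖ ↥M₁ ∧
    sSpectrum (restrictOp T M₁ h₁) ∩ sSpectrum (restrictOp T M₂ h₂) = ∅ ∧
    sSpectrum (restrictOp T M₁ h₁) = qSphere q

end Sub
section Aux

variable {W : Type*} [NormedAddCommGroup W] [Module ℍᵐᵒᵖ W] [Module ℝ W]
  [SMulCommClass ℍᵐᵒᵖ ℝ W] [ContinuousConstSMul ℝ W]

lemma Qs_apply (T : W →L[ℍᵐᵒᵖ] W) (q : ℍ) (x : W) :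
    Qs T q x = T (T x) - (2 * q.re) • T x + (‖q‖ ^ 2) • x := by
  simp [Qs, ContinuousLinearMap.mul_apply]

set_option linter.unusedSectionVars false in
lemma restrictOp_apply (T : W →L[ℍᵐᵒᵖ] W) (M : Submodule ℍᵐᵒᵖ W)
    (h : ∀ x ∈ M, T x ∈ M) (x : ↥M) : ((restrictOp T M h x : ↥M) : W) = T x := rfl

end Aux

lemma re_le_norm_quat (q : ℍ) : q.re ≤ ‖q‖ := by
  have h1 : Quaternion.normSq q = ‖q‖ * ‖q‖ := Quaternion.normSq_eq_norm_mul_self q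
  have h2 : Quaternion.normSq q = q.re ^ 2 + q.imI ^ 2 + q.imJ ^ 2 + q.imK ^ 2 :=
    Quaternion.normSq_def' q
  nlinarith [sq_nonneg q.imI, sq_nonneg q.imJ, sq_nonneg q.imK, norm_nonneg q,
    sq_nonneg (q.re - ‖q‖), sq_nonneg (q.re + ‖q‖)]

set_option maxHeartbeats 1600000 in
set_option synthInstance.maxHeartbeats 400000 in
theorem stmt5 {V : Type*} [NormedAddCommGroup V] [NormedSpace ℝ V] [CompleteSpace V]
    [Module ℍᵐᵒᵖ V] [IsScalarTower ℝ ℍᵐᵒᵖ V] [SMulCommClass ℍᵐᵒᵖ ℝ V]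
    (hnorm : ∀ (x : V) (q : ℍ), ‖op q • x‖ = ‖x‖ * ‖q‖)
    (T : V →L[ℍᵐᵒᵖ] V) (q : ℍ) (hq : q ∈ sSpectrum T)
    (hft : IsFiniteTypeEigenvalue T q) :
    q ∉ weylSpectrum T := by
  classical
  obtain ⟨M₁, M₂, h₁, h₂, hc₁, hc₂, hcompl, hfd, hdisj, hsph⟩ := hft
  -- the two algebraic projections
  set π₁ : V →ₗ[ℍᵐᵒᵖ] ↥M₁ := M₁.projectionOnto M₂ hcompl with hπ₁def
  set π₂ : V →ₗ[ℍᵐᵒᵖ] ↥M₂ := M₂.projectionOnto M₁ hcompl.symm with hπ₂def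
  have hsum : ∀ x : V, ((π₁ x : V) + (π₂ x : V)) = x := fun x =>
    Submodule.projection_add_projection_eq_self hcompl x
  have hπ₁left : ∀ (x : V) (hx : x ∈ M₁), π₁ x = ⟨x, hx⟩ := fun x hx =>
    Submodule.projectionOnto_apply_left hcompl ⟨x, hx⟩
  have hπ₁right : ∀ x ∈ M₂, π₁ x = 0 := fun x hx =>
    (Submodule.projectionOnto_apply_eq_zero_iff hcompl).2 hx
  have hπ₂left : ∀ (x : V) (hx : x ∈ M₂), π₂ x = ⟨x, hx⟩ := fun x hx =>
    Submodule.projectionOnto_apply_left hcompl.symm ⟨x, hx⟩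
  have hπ₂right : ∀ x ∈ M₁, π₂ x = 0 := fun x hx =>
    (Submodule.projectionOnto_apply_eq_zero_iff hcompl.symm).2 hx
  -- the real-linear projection onto M₁, as an endomorphism of V
  set p : V →ₗ[ℝ] V := (M₁.subtype.comp π₁).restrictScalars ℝ with hpdef
  have hpval : ∀ x : V, p x = (π₁ x : V) := fun x => rfl
  have hpmem : ∀ x, p x ∈ M₁ := fun x => (π₁ x).2
  have hcomp₂ : ∀ x : V, x - p x = (π₂ x : V) := by
    intro x
    rw [hpval]
    exact sub_eq_of_eq_add' (hsum x).symm
  have hpleft : ∀ x ∈ M₁, p x = x := by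
    intro x hx
    rw [hpval, hπ₁left x hx]
  have hpright : ∀ x ∈ M₂, p x = 0 := by
    intro x hx
    rw [hpval, hπ₁right x hx, Submodule.coe_zero]
  -- continuity of the projection, by the closed graph theorem
  have hpcont : Continuous p := by
    apply p.continuous_of_seq_closed_graph
    intro u x y hux huy
    have hymem : y ∈ M₁ :=
      hc₁.mem_of_tendsto huy (Filter.Eventually.of_forall fun n => hpmem (u n))
    have hxy : x - y ∈ M₂ := by
      have h2 : ∀ n, u n - p (u n) ∈ M₂ := fun n => by
        rw [hcomp₂ (u n)]; exact (π₂ (u n)).2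
      exact hc₂.mem_of_tendsto (hux.sub huy) (Filter.Eventually.of_forall h2)
    have h3 : p x = p y + p (x - y) := by rw [← map_add]; congr 1; abel
    rw [h3, hpleft y hymem, hpright _ hxy, add_zero]
  have hπ₁cont : Continuous fun x => π₁ x := by
    have h4 : (fun x => π₁ x) = fun x => (⟨p x, hpmem x⟩ : ↥M₁) := by
      funext x; exact Subtype.ext (hpval x)
    rw [h4]; exact hpcont.subtype_mk _
  have hπ₂cont : Continuous fun x => π₂ x := by
    have h4 : (fun x => π₂ x) = fun x => (⟨x - p x, by rw [hcomp₂ x]; exact (π₂ x).2⟩ : ↥M₂) := by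
      funext x; exact Subtype.ext (hcomp₂ x).symm
    rw [h4]; exact (continuous_id.sub hpcont).subtype_mk _
  -- continuous linear projections
  set Pc₁ : V →L[ℍᵐᵒᵖ] ↥M₁ := ⟨π₁, hπ₁cont⟩ with hPc₁def
  set Pc₂ : V →L[ℍᵐᵒᵖ] ↥M₂ := ⟨π₂, hπ₂cont⟩ with hPc₂def
  set P₁ : V →L[ℍᵐᵒᵖ] V := M₁.subtypeL.comp Pc₁ with hP₁def
  have hP₁val : ∀ x : V, P₁ x = (π₁ x : V) := fun x => rfl
  have hP₁mem : ∀ x, P₁ x ∈ M₁ := fun x => (π₁ x).2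
  have hP₁left : ∀ x ∈ M₁, P₁ x = x := fun x hx => by rw [hP₁val, hπ₁left x hx]
  have hP₁right : ∀ x ∈ M₂, P₁ x = 0 := fun x hx => by
    rw [hP₁val, hπ₁right x hx, Submodule.coe_zero]
  -- the scalar
  set c : ℝ := ‖q‖ + 1 with hcdef
  have hcpos : 0 < c := by positivity
  set r : ℝ := c ^ 2 - 2 * q.re * c + ‖q‖ ^ 2 with hrdef
  have hr : 0 < r := by
    rw [hrdef, hcdef]
    have h1 : q.re ≤ ‖q‖ := re_le_norm_quat q
    have h2 : 0 ≤ (‖q‖ - q.re) * (‖q‖ + 1) :=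
      mul_nonneg (sub_nonneg.2 h1) (by positivity)
    nlinarith [h2]
  -- the compact perturbation
  set K : V →L[ℍᵐᵒᵖ] V := c • P₁ - T * P₁ with hKdef
  have hKval : ∀ x : V, K x = c • P₁ x - T (P₁ x) := fun x => rfl
  have hKmem : ∀ x, K x ∈ M₁ := fun x => by
    rw [hKval]
    exact M₁.sub_mem (M₁.smul_of_tower_mem c (hP₁mem x)) (h₁ _ (hP₁mem x))
  -- action of T + K on M₁ and M₂
  have hTK1 : ∀ x ∈ M₁, (T + K) x = c • x := by
    intro x hx
    rw [ContinuousLinearMap.add_apply, hKval, hP₁left x hx]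
    abel
  have hTK2 : ∀ x ∈ M₂, (T + K) x = T x := by
    intro x hx
    rw [ContinuousLinearMap.add_apply, hKval, hP₁right x hx]
    simp
  have hA1 : ∀ x ∈ M₁, Qs (T + K) q x = r • x := by
    intro x hx
    have hm : c • x ∈ M₁ := M₁.smul_of_tower_mem c hx
    rw [Qs_apply, hTK1 x hx, hTK1 _ hm, hrdef]
    module
  have hA2 : ∀ x ∈ M₂, Qs (T + K) q x = Qs T q x := by
    intro x hx
    rw [Qs_apply, Qs_apply, hTK2 x hx, hTK2 _ (h₂ x hx)]
  -- the restriction of Qs T q to M₂, and its inverse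
  set Q₂ : ↥M₂ →L[ℍᵐᵒᵖ] ↥M₂ := Qs (restrictOp T M₂ h₂) q with hQ₂def
  have hQ2coe : ∀ y : ↥M₂, ((Q₂ y : ↥M₂) : V) = Qs T q (y : V) := by
    intro y
    rw [hQ₂def, Qs_apply, Qs_apply]
    push_cast [restrictOp_apply]
    rfl
  have hqsph : q ∈ qSphere q := ⟨1, one_ne_zero, by simp⟩
  have hq1 : q ∈ sSpectrum (restrictOp T M₁ h₁) := hsph ▸ hqsph
  have hq₂ : IsUnit Q₂ := by
    by_contra h
    exact Set.eq_empty_iff_forall_notMem.1 hdisj q ⟨hq1, h⟩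
  obtain ⟨u, hu⟩ := hq₂
  set S₂ : ↥M₂ →L[ℍᵐᵒᵖ] ↥M₂ := ↑u⁻¹ with hS₂def
  have hSQ : ∀ y, S₂ (Q₂ y) = y := by
    intro y
    have h1 : S₂ * Q₂ = 1 := by rw [hS₂def, ← hu]; exact u.inv_mul
    calc S₂ (Q₂ y) = (S₂ * Q₂) y := rfl
    _ = y := by rw [h1]; rfl
  have hQS : ∀ y, Q₂ (S₂ y) = y := by
    intro y
    have h1 : Q₂ * S₂ = 1 := by rw [hS₂def, ← hu]; exact u.mul_inv
    calc Q₂ (S₂ y) = (Q₂ * S₂) y := rfl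
    _ = y := by rw [h1]; rfl
  -- the two-sided inverse of Qs (T+K) q
  set B : V →L[ℍᵐᵒᵖ] V := (r⁻¹ : ℝ) • P₁ + M₂.subtypeL.comp (S₂.comp Pc₂) with hBdef
  have hBval : ∀ x : V, B x = r⁻¹ • P₁ x + ((S₂ (π₂ x) : ↥M₂) : V) := fun x => rfl
  have hBa : ∀ (a : V), a ∈ M₁ → B a = r⁻¹ • a := by
    intro a ha
    rw [hBval, hP₁left a ha, hπ₂right a ha, map_zero, Submodule.coe_zero, add_zero]
  have hBb : ∀ (b : ↥M₂), B (b : V) = ((S₂ b : ↥M₂) : V) := by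
    intro b
    rw [hBval, hP₁right _ b.2, hπ₂left _ b.2, smul_zero, zero_add, Subtype.coe_eta]
  have hAB : Qs (T + K) q * B = 1 := by
    ext x
    obtain ⟨a, b, hab⟩ : ∃ (a : ↥M₁) (b : ↥M₂), x = (a : V) + (b : V) :=
      ⟨π₁ x, π₂ x, (hsum x).symm⟩
    rw [ContinuousLinearMap.mul_apply, ContinuousLinearMap.one_apply, hab, map_add,
      hBa _ a.2, hBb b, map_add]
    have hh1 : Qs (T + K) q (r⁻¹ • (a : V)) = (a : V) := by
      rw [hA1 _ (M₁.smul_of_tower_mem _ a.2), smul_smul, mul_inv_cancel₀ hr.ne', one_smul]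
    have hh2 : Qs (T + K) q ((S₂ b : ↥M₂) : V) = (b : V) := by
      rw [hA2 _ (S₂ b).2, ← hQ2coe, hQS]
    rw [hh1, hh2]
  have hBA : B * Qs (T + K) q = 1 := by
    ext x
    obtain ⟨a, b, hab⟩ : ∃ (a : ↥M₁) (b : ↥M₂), x = (a : V) + (b : V) :=
      ⟨π₁ x, π₂ x, (hsum x).symm⟩
    rw [ContinuousLinearMap.mul_apply, ContinuousLinearMap.one_apply, hab, map_add,
      hA1 _ a.2, hA2 _ b.2, ← hQ2coe, map_add]
    have hh1 : B (r • (a : V)) = (a : V) := by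
      rw [hBa _ (M₁.smul_of_tower_mem r a.2), smul_smul, inv_mul_cancel₀ hr.ne', one_smul]
    have hh2 : B ((Q₂ b : ↥M₂) : V) = (b : V) := by
      rw [hBb, hSQ]
    rw [hh1, hh2]
  have hAunit : IsUnit (Qs (T + K) q) := ⟨⟨Qs (T + K) q, B, hAB, hBA⟩, rfl⟩
  -- K is a compact operator
  letI : NormedSpace ℝ ↥M₁ := ⟨fun s x => by
    change ‖((s • x : ↥M₁) : V)‖ ≤ ‖s‖ * ‖(x : V)‖
    rw [Submodule.coe_smul_of_tower]
    exact norm_smul_le s (x : V)⟩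
  haveI hmfin : Module.Finite ℝ ℍᵐᵒᵖ := Module.Finite.equiv (MulOpposite.opLinearEquiv ℝ)
  haveI hfdr : FiniteDimensional ℝ ↥M₁ := Module.Finite.trans ℍᵐᵒᵖ ↥M₁
  haveI hprop : ProperSpace ↥M₁ := @FiniteDimensional.proper ℝ _ ↥M₁ _ _ _ (by exact hfdr)
  have hKcomp : IsCompactOp K := by
    show IsCompact (closure (⇑K '' Metric.closedBall (0 : V) 1))
    set Kr : V →L[ℝ] V := K.restrictScalars ℝ with hKrdef
    have hb0 : Bornology.IsBounded (⇑K '' Metric.closedBall (0 : V) 1) := by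
      refine isBounded_iff_forall_norm_le.2 ⟨‖Kr‖, ?_⟩
      rintro y ⟨x, hx, rfl⟩
      have hx1 : ‖x‖ ≤ 1 := by
        rw [Metric.mem_closedBall, dist_zero_right] at hx; exact hx
      calc ‖K x‖ = ‖Kr x‖ := rfl
      _ ≤ ‖Kr‖ * ‖x‖ := Kr.le_opNorm x
      _ ≤ ‖Kr‖ * 1 := mul_le_mul_of_nonneg_left hx1 (norm_nonneg Kr)
      _ = ‖Kr‖ := mul_one _
    have hbc : Bornology.IsBounded (closure (⇑K '' Metric.closedBall (0 : V) 1)) := hb0.closure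
    have hsub : closure (⇑K '' Metric.closedBall (0 : V) 1) ⊆ M₁ := by
      refine closure_minimal ?_ hc₁
      rintro y ⟨x, _, rfl⟩; exact hKmem x
    set s1 : Set ↥M₁ := Subtype.val ⁻¹' closure (⇑K '' Metric.closedBall (0 : V) 1) with hs1def
    have hs1c : IsClosed s1 := isClosed_closure.preimage continuous_subtype_val
    have hs1b : Bornology.IsBounded s1 := by
      obtain ⟨C, hC⟩ := isBounded_iff_forall_norm_le.1 hbc
      exact isBounded_iff_forall_norm_le.2 ⟨C, fun y hy => hC _ hy⟩
    have hs1 : IsCompact s1 := Metric.isCompact_of_isClosed_isBounded hs1c hs1b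
    have himg : closure (⇑K '' Metric.closedBall (0 : V) 1) = Subtype.val '' s1 := by
      apply Set.Subset.antisymm
      · intro y hy; exact ⟨⟨y, hsub hy⟩, hy, rfl⟩
      · exact Set.image_preimage_subset _ _
    rw [himg]
    exact hs1.image continuous_subtype_val
  -- conclusion
  intro hmem
  have h5 : q ∈ sSpectrum (T + K) := Set.mem_iInter₂.1 hmem K hKcomp
  exact h5 hAunit
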